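/- Let q be a prime power, P a closed point of P^2 over F_q of degree e, and d an integer with 3e ≤ d. Let S_d be the space of homogeneous degree-d forms over F_q. Then the fraction of F ∈ S_d such that the curve C_F fails to be smooth of dimension 1 at P (i.e., F and both dehomogenized partial derivatives vanish at P) equals q^{-3e}. -/

import Mathlib

open MvPolynomial



section Chain

variable {F K : Type*} [Field F] [Field K] [Algebra F K]

variable (F) in
/-- span of monomials in `w₁, w₂` of total degree at most `m`. -/
noncomputable def Wc (w₁ w₂ : K) (m : ℕ) : Submodule F K :=
  Submodule.span F {x | ∃ a b : ℕ, a + b ≤ m ∧ x = w₁ ^ a * w₂ ^ b}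

lemma Wc_mono (w₁ w₂ : K) : Monotone (Wc F w₁ w₂) := fun m n hmn =>
  Submodule.span_mono (fun x ⟨a, b, hab, hx⟩ => ⟨a, b, hab.trans hmn, hx⟩)

lemma one_mem_Wc (w₁ w₂ : K) (m : ℕ) : (1 : K) ∈ Wc F w₁ w₂ m :=
  Submodule.subset_span ⟨0, 0, by simp, by simp⟩

lemma Wc_mul (w₁ w₂ : K) (m n : ℕ) {x y : K} (hx : x ∈ Wc F w₁ w₂ m)
    (hy : y ∈ Wc F w₁ w₂ n) : x * y ∈ Wc F w₁ w₂ (m + n) := by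
  have h : Wc F w₁ w₂ m * Wc F w₁ w₂ n ≤ Wc F w₁ w₂ (m + n) := by
    rw [Wc, Wc, Submodule.span_mul_span]
    apply Submodule.span_le.mpr
    rintro z ⟨x, hx, y, hy, rfl⟩
    obtain ⟨a, b, hab, rfl⟩ := hx
    obtain ⟨a', b', hab', rfl⟩ := hy
    exact Submodule.subset_span ⟨a + a', b + b', by omega, by ring⟩
  exact h (Submodule.mul_mem_mul hx hy)

lemma Wc_stab (w₁ w₂ : K) (m : ℕ) (h : Wc F w₁ w₂ (m + 1) ≤ Wc F w₁ w₂ m) :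
    ∀ n, Wc F w₁ w₂ n ≤ Wc F w₁ w₂ m := by
  intro n
  induction n with
  | zero => exact Wc_mono _ _ (Nat.zero_le m)
  | succ n ih =>
    apply Submodule.span_le.mpr
    rintro x ⟨a, b, hab, rfl⟩
    rcases le_or_gt (a + b) m with hm | hm
    · exact Submodule.subset_span ⟨a, b, hm, rfl⟩
    rcases Nat.eq_zero_or_pos a with rfl | ha
    · obtain ⟨b', rfl⟩ : ∃ b', b = b' + 1 := ⟨b - 1, by omega⟩
      have hmem : (w₁ ^ 0 * w₂ ^ b' : K) ∈ Wc F w₁ w₂ m :=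
        ih (Submodule.subset_span ⟨0, b', by omega, rfl⟩)
      have h2 : w₂ ∈ Wc F w₁ w₂ 1 := Submodule.subset_span ⟨0, 1, le_refl 1, by ring⟩
      have hx : (w₁ ^ 0 * w₂ ^ (b' + 1) : K) = w₂ * (w₁ ^ 0 * w₂ ^ b') := by ring
      rw [hx]
      have := Wc_mul w₁ w₂ 1 m h2 hmem
      rw [Nat.add_comm] at this
      exact h this
    · obtain ⟨a', rfl⟩ : ∃ a', a = a' + 1 := ⟨a - 1, by omega⟩
      have hmem : (w₁ ^ a' * w₂ ^ b : K) ∈ Wc F w₁ w₂ m :=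
        ih (Submodule.subset_span ⟨a', b, by omega, rfl⟩)
      have h1 : w₁ ∈ Wc F w₁ w₂ 1 := Submodule.subset_span ⟨1, 0, le_refl 1, by ring⟩
      have hx : (w₁ ^ (a' + 1) * w₂ ^ b : K) = w₁ * (w₁ ^ a' * w₂ ^ b) := by ring
      rw [hx]
      have := Wc_mul w₁ w₂ 1 m h1 hmem
      rw [Nat.add_comm] at this
      exact h this

lemma Wc_exists (w₁ w₂ : K) (hgen : Algebra.adjoin F {w₁, w₂} = ⊤) (x : K) :
    ∃ m, x ∈ Wc F w₁ w₂ m := by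
  have hx : x ∈ Algebra.adjoin F ({w₁, w₂} : Set K) := by rw [hgen]; trivial
  induction hx using Algebra.adjoin_induction with
  | mem y hy =>
      rcases hy with rfl | rfl
      · exact ⟨1, Submodule.subset_span ⟨1, 0, le_refl 1, by ring⟩⟩
      · exact ⟨1, Submodule.subset_span ⟨0, 1, le_refl 1, by ring⟩⟩
  | algebraMap r =>
      refine ⟨0, ?_⟩
      rw [Algebra.algebraMap_eq_smul_one]
      exact Submodule.smul_mem _ _ (one_mem_Wc w₁ w₂ 0)
  | add x y hx hy ihx ihy =>
      obtain ⟨m, hm⟩ := ihx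
      obtain ⟨n, hn⟩ := ihy
      exact ⟨max m n, add_mem (Wc_mono w₁ w₂ (le_max_left m n) hm)
        (Wc_mono w₁ w₂ (le_max_right m n) hn)⟩
  | mul x y hx hy ihx ihy =>
      obtain ⟨m, hm⟩ := ihx
      obtain ⟨n, hn⟩ := ihy
      exact ⟨m + n, Wc_mul w₁ w₂ m n hm hn⟩

lemma Wc_top [FiniteDimensional F K] {e : ℕ} (hrank : Module.finrank F K = e) (he : 1 ≤ e)
    (w₁ w₂ : K) (hgen : Algebra.adjoin F {w₁, w₂} = ⊤) {m : ℕ} (hm : e - 1 ≤ m) :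
    Wc F w₁ w₂ m = ⊤ := by
  have claim : ∀ k, Wc F w₁ w₂ k = ⊤ ∨ k + 1 ≤ Module.finrank F (Wc F w₁ w₂ k) := by
    intro k
    induction k with
    | zero =>
        right
        have hnt : Nontrivial (Wc F w₁ w₂ 0) :=
          ⟨⟨1, one_mem_Wc w₁ w₂ 0⟩, 0, by
            intro hcon
            exact one_ne_zero (Subtype.ext_iff.mp hcon)⟩
        have := Module.finrank_pos_iff (R := F) (M := Wc F w₁ w₂ 0) |>.mpr hnt
        omega
    | succ k ih =>
        rcases ih with h | h
        · left
          exact top_unique (h ▸ Wc_mono w₁ w₂ (Nat.le_succ k))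
        · rcases lt_or_eq_of_le (Wc_mono (F := F) w₁ w₂ (Nat.le_succ k)) with hlt | heq
          · right
            have := Submodule.finrank_lt_finrank_of_lt hlt
            simp only [Nat.succ_eq_add_one] at this ⊢
            omega
          · left
            have hst := Wc_stab w₁ w₂ k (le_of_eq heq.symm)
            have htop : Wc F w₁ w₂ k = ⊤ := by
              rw [eq_top_iff]
              intro x _
              obtain ⟨n, hn⟩ := Wc_exists w₁ w₂ hgen x
              exact hst n hn
            rw [← heq, htop]
  rcases claim (e - 1) with h | h
  · exact top_unique (h ▸ Wc_mono w₁ w₂ hm)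
  · have hle := Submodule.finrank_le (Wc F w₁ w₂ (e - 1))
    have heq : Module.finrank F (Wc F w₁ w₂ (e - 1)) = Module.finrank F K := by omega
    have htop := Submodule.eq_top_of_finrank_eq heq
    exact top_unique (htop ▸ Wc_mono w₁ w₂ hm)

end Chain

section Helpers

lemma degree_eq_sum_univ {σ : Type*} [Fintype σ] (d : σ →₀ ℕ) :
    d.degree = ∑ i : σ, d i :=
  Finset.sum_subset (Finset.subset_univ _) (fun i _ hi => by
    simpa using Finsupp.notMem_support_iff.mp hi)

lemma sum_single_univ {σ : Type*} [Fintype σ] [DecidableEq σ] (j : σ) (k : ℕ) :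
    ∑ i : σ, Finsupp.single j k i = k := by
  simp [Finsupp.single_apply]

variable {F K : Type*} [Field F] [Field K] [Algebra F K]

lemma exists_homog (v : Fin 3 → K) (c i₁ i₂ : Fin 3)
    (hvc : v c = 1) {D : ℕ} {κ : K}
    (hκ : κ ∈ Submodule.span F {x | ∃ a b : ℕ, a + b ≤ D ∧ x = (v i₁) ^ a * (v i₂) ^ b}) :
    ∃ U : MvPolynomial (Fin 3) F, U ∈ homogeneousSubmodule (Fin 3) F D ∧ aeval v U = κ := by
  induction hκ using Submodule.span_induction with
  | mem x hx =>
      obtain ⟨a, b, hab, rfl⟩ := hx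
      refine ⟨monomial (Finsupp.single i₁ a + Finsupp.single i₂ b +
        Finsupp.single c (D - (a + b))) 1, ?_, ?_⟩
      · rw [mem_homogeneousSubmodule]
        apply isHomogeneous_monomial
        rw [degree_eq_sum_univ]
        simp only [Finsupp.coe_add, Pi.add_apply, Finset.sum_add_distrib, sum_single_univ]
        omega
      · rw [aeval_monomial]
        rw [Finsupp.prod_add_index' (fun a => pow_zero _) (fun a b₁ b₂ => pow_add _ _ _)]
        rw [Finsupp.prod_add_index' (fun a => pow_zero _) (fun a b₁ b₂ => pow_add _ _ _)]
        rw [Finsupp.prod_single_index (h := fun j e => v j ^ e) (pow_zero _), Finsupp.prod_single_index (h := fun j e => v j ^ e) (pow_zero _),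
          Finsupp.prod_single_index (h := fun j e => v j ^ e) (pow_zero _)]
        simp [hvc]
  | zero => exact ⟨0, Submodule.zero_mem _, map_zero _⟩
  | add x y hx hy ihx ihy =>
      obtain ⟨U, hU, hUv⟩ := ihx
      obtain ⟨U', hU', hU'v⟩ := ihy
      exact ⟨U + U', Submodule.add_mem _ hU hU', by rw [map_add, hUv, hU'v]⟩
  | smul r x hx ihx =>
      obtain ⟨U, hU, hUv⟩ := ihx
      refine ⟨r • U, Submodule.smul_mem _ _ hU, ?_⟩
      rw [map_smul, hUv]

/-- Homogenization of a univariate polynomial, in variables `i` and `c`. -/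
noncomputable def Mp (i c : Fin 3) (p : Polynomial F) : MvPolynomial (Fin 3) F :=
  ∑ k ∈ Finset.range (p.natDegree + 1),
    monomial (Finsupp.single i k + Finsupp.single c (p.natDegree - k)) (p.coeff k)

lemma Mp_mem (i c : Fin 3) (p : Polynomial F) :
    Mp i c p ∈ homogeneousSubmodule (Fin 3) F p.natDegree := by
  apply Submodule.sum_mem
  intro k hk
  rw [Finset.mem_range] at hk
  rw [mem_homogeneousSubmodule]
  apply isHomogeneous_monomial
  rw [degree_eq_sum_univ]
  simp only [Finsupp.coe_add, Pi.add_apply, Finset.sum_add_distrib, sum_single_univ]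
  omega

lemma Mp_aeval (v : Fin 3 → K) (i c : Fin 3) (hvc : v c = 1) (p : Polynomial F) :
    aeval v (Mp i c p) = Polynomial.aeval (v i) p := by
  rw [Mp, map_sum, Polynomial.aeval_eq_sum_range' (Nat.lt_succ_self _)]
  apply Finset.sum_congr rfl
  intro k hk
  rw [aeval_monomial,
    Finsupp.prod_add_index' (fun a => pow_zero _) (fun a b₁ b₂ => pow_add _ _ _),
    Finsupp.prod_single_index (h := fun j e => v j ^ e) (pow_zero _), Finsupp.prod_single_index (h := fun j e => v j ^ e) (pow_zero _),
    hvc, one_pow, mul_one, Algebra.smul_def]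

lemma Mp_pderiv_other (i c j : Fin 3) (hji : j ≠ i) (hjc : j ≠ c) (p : Polynomial F) :
    pderiv j (Mp i c p) = 0 := by
  rw [Mp, map_sum]
  apply Finset.sum_eq_zero
  intro k hk
  rw [pderiv_monomial]
  have : (Finsupp.single i k + Finsupp.single c (p.natDegree - k)) j = 0 := by
    simp [Finsupp.single_apply, (Ne.symm hji), (Ne.symm hjc)]
  rw [this]
  simp

lemma Mp_pderiv_self (v : Fin 3 → K) (i c : Fin 3) (hic : i ≠ c) (hvc : v c = 1)
    (p : Polynomial F) :
    aeval v (pderiv i (Mp i c p)) = Polynomial.aeval (v i) (Polynomial.derivative p) := by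
  have hd : (Polynomial.derivative p).natDegree < p.natDegree + 1 :=
    Nat.lt_succ_of_le ((Polynomial.natDegree_derivative_le p).trans (Nat.sub_le _ _))
  rw [Mp, map_sum, map_sum, Polynomial.aeval_eq_sum_range' hd]
  have hterm : ∀ k, k ∈ Finset.range (p.natDegree + 1) →
      aeval v (pderiv i (monomial
        (Finsupp.single i k + Finsupp.single c (p.natDegree - k)) (p.coeff k)))
      = (p.coeff k * k) • (v i) ^ (k - 1) := by
    intro k hk
    rw [pderiv_monomial]
    have happ : (Finsupp.single i k + Finsupp.single c (p.natDegree - k)) i = k := by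
      simp [Finsupp.single_apply, hic, Ne.symm hic]
    rw [happ]
    have hsub : (Finsupp.single i k + Finsupp.single c (p.natDegree - k)) - Finsupp.single i 1
        = Finsupp.single i (k - 1) + Finsupp.single c (p.natDegree - k) := by
      ext j
      rcases eq_or_ne j i with rfl | hji
      · simp [Finsupp.single_apply, Ne.symm hic, hic]
      · rcases eq_or_ne j c with rfl | hjc
        · simp [Finsupp.single_apply, Ne.symm hic, hic, Ne.symm hji]
        · simp [Finsupp.single_apply, Ne.symm hji, Ne.symm hjc]
    rw [hsub, aeval_monomial,
      Finsupp.prod_add_index' (fun a => pow_zero _) (fun a b₁ b₂ => pow_add _ _ _),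
      Finsupp.prod_single_index (h := fun j e => v j ^ e) (pow_zero _), Finsupp.prod_single_index (h := fun j e => v j ^ e) (pow_zero _),
      hvc, one_pow, mul_one, Algebra.smul_def]
  rw [Finset.sum_congr rfl hterm]
  rw [Finset.sum_range_succ' (fun k => (p.coeff k * k) • (v i) ^ (k - 1))]
  rw [Finset.sum_range_succ (fun k => (Polynomial.derivative p).coeff k • (v i) ^ k)]
  have hlast : (Polynomial.derivative p).coeff p.natDegree • (v i) ^ p.natDegree = 0 := by
    rcases Nat.eq_zero_or_pos p.natDegree with h0 | h0
    · simp only [Polynomial.coeff_derivative]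
      rw [Polynomial.coeff_eq_zero_of_natDegree_lt (by omega)]
      simp
    · rw [Polynomial.coeff_eq_zero_of_natDegree_lt
        (lt_of_le_of_lt (Polynomial.natDegree_derivative_le p) (by omega))]
      simp
  rw [hlast, add_zero]
  simp only [Nat.cast_zero, mul_zero, zero_smul, add_zero]
  apply Finset.sum_congr rfl
  intro k hk
  rw [Polynomial.coeff_derivative]
  simp [Nat.add_sub_cancel]
end Helpers

section Euler
variable {F K : Type*} [Field F] [Field K] [Algebra F K]

lemma degree_eq_sum_univ' {σ : Type*} [Fintype σ] (d : σ →₀ ℕ) :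
    d.degree = ∑ i : σ, d i :=
  Finset.sum_subset (Finset.subset_univ _) (fun i _ hi => by
    simpa using Finsupp.notMem_support_iff.mp hi)

lemma euler_identity (v : Fin 3 → K) {d : ℕ} {G : MvPolynomial (Fin 3) F}
    (hG : G.IsHomogeneous d) :
    ∑ i : Fin 3, v i * aeval v (pderiv i G) = d * aeval v G := by
  have hGmem : G ∈ homogeneousSubmodule (Fin 3) F d := hG
  rw [homogeneousSubmodule_eq_finsupp_supported, AddMonoidAlgebra.supported_eq_span_single] at hGmem
  clear hG
  induction hGmem using Submodule.span_induction with
  | mem x hx =>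
      obtain ⟨s, hs, rfl⟩ := hx
      rw [Set.mem_setOf_eq] at hs
      simp only [single_eq_monomial]
      have hterm : ∀ i : Fin 3,
          v i * aeval v (pderiv i (monomial s (1 : F))) = (s i : K) * aeval v (monomial s (1 : F)) := by
        intro i
        rcases Nat.eq_zero_or_pos (s i) with h0 | hpos
        · rw [pderiv_monomial, h0]
          simp
        · rw [pderiv_monomial, aeval_monomial, aeval_monomial]
          have hs' : s = (s - Finsupp.single i 1) + Finsupp.single i 1 := by
            rw [tsub_add_cancel_of_le]
            rwa [Finsupp.single_le_iff]
          have hprod : s.prod (fun j e => v j ^ e)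
              = (s - Finsupp.single i 1).prod (fun j e => v j ^ e) * v i := by
            conv_lhs => rw [hs']
            rw [Finsupp.prod_add_index' (fun a => pow_zero _) (fun a b₁ b₂ => pow_add _ _ _),
              Finsupp.prod_single_index (h := fun j e => v j ^ e) (pow_zero _), pow_one]
          rw [hprod]
          simp only [map_natCast, map_one, map_mul, one_mul]
          ring
      refine (Finset.sum_congr rfl fun i _ => hterm i).trans ?_
      rw [← Finset.sum_mul, ← Nat.cast_sum, ← degree_eq_sum_univ', hs]
  | zero => simp
  | add x y hx hy ihx ihy =>
      simp only [map_add, mul_add, Finset.sum_add_distrib, ihx, ihy]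
  | smul r x hx ihx =>
      simp only [Derivation.map_smul, map_smul, Algebra.smul_def (A := K)]
      calc ∑ i : Fin 3, v i * (algebraMap F K r * aeval v (pderiv i x))
          = algebraMap F K r * ∑ i : Fin 3, v i * aeval v (pderiv i x) := by
            rw [Finset.mul_sum]; apply Finset.sum_congr rfl; intros; ring
        _ = algebraMap F K r * (d * aeval v x) := by rw [ihx]
        _ = d * (algebraMap F K r * aeval v x) := by ring

lemma pderiv_c_eq_zero (v : Fin 3 → K) (c i₁ i₂ : Fin 3)
    (hcover : ∀ i : Fin 3, i = c ∨ i = i₁ ∨ i = i₂) (hvc : v c = 1)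
    {d : ℕ} {G : MvPolynomial (Fin 3) F} (hG : G.IsHomogeneous d)
    (h0 : aeval v G = 0) (h1 : aeval v (pderiv i₁ G) = 0) (h2 : aeval v (pderiv i₂ G) = 0) :
    ∀ i : Fin 3, aeval v (pderiv i G) = 0 := by
  have he := euler_identity v hG
  rw [h0, mul_zero] at he
  have hsum : ∑ i : Fin 3, v i * aeval v (pderiv i G) = v c * aeval v (pderiv c G) := by
    apply Finset.sum_eq_single_of_mem c (Finset.mem_univ c)
    intro j _ hj
    rcases hcover j with rfl | rfl | rfl
    · exact absurd rfl hj
    · rw [h1, mul_zero]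
    · rw [h2, mul_zero]
  rw [hsum, hvc, one_mul] at he
  intro i
  rcases hcover i with rfl | rfl | rfl
  exacts [he, h1, h2]

end Euler
section Surj
variable {F K : Type*} [Field F] [Fintype F] [Field K] [Fintype K] [Algebra F K]

lemma key_surj {e : ℕ} (hrank : Module.finrank F K = e) (he : 1 ≤ e)
    (v : Fin 3 → K) (c i₁ i₂ : Fin 3) (h1c : i₁ ≠ c) (h2c : i₂ ≠ c) (h12 : i₁ ≠ i₂)
    (hcover : ∀ i : Fin 3, i = c ∨ i = i₁ ∨ i = i₂) (hvc : v c = 1)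
    (hgen : Algebra.adjoin F (Set.range v) = ⊤)
    {d : ℕ} (hd : 3 * e ≤ d) :
    ∀ a b₁ b₂ : K, ∃ G ∈ homogeneousSubmodule (Fin 3) F d,
      aeval v G = a ∧ aeval v (pderiv i₁ G) = b₁ ∧ aeval v (pderiv i₂ G) = b₂ := by
  intro a b₁ b₂
  set w₁ := v i₁ with hw₁
  set w₂ := v i₂ with hw₂
  have hpair : Algebra.adjoin F ({w₁, w₂} : Set K) = ⊤ := by
    rw [eq_top_iff, ← hgen]
    apply Algebra.adjoin_le
    rintro x ⟨i, rfl⟩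
    rcases hcover i with rfl | rfl | rfl
    · rw [hvc]; exact one_mem _
    · exact Algebra.subset_adjoin (by simp [hw₁])
    · exact Algebra.subset_adjoin (by simp [hw₂])
  have hrep : ∀ D : ℕ, e - 1 ≤ D → ∀ κ : K,
      ∃ U ∈ homogeneousSubmodule (Fin 3) F D, aeval v U = κ := by
    intro D hD κ
    have hmem : κ ∈ Wc F w₁ w₂ D := by
      rw [Wc_top hrank he w₁ w₂ hpair hD]; trivial
    exact exists_homog v c i₁ i₂ hvc hmem
  -- minimal polynomial data
  have hint1 : IsIntegral F w₁ := IsIntegral.of_finite F w₁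
  have hint2 : IsIntegral F w₂ := IsIntegral.of_finite F w₂
  set p₁ := minpoly F w₁ with hp₁
  set p₂ := minpoly F w₂ with hp₂
  have hn₁pos : 0 < p₁.natDegree := minpoly.natDegree_pos hint1
  have hn₂pos : 0 < p₂.natDegree := minpoly.natDegree_pos hint2
  have hn₁le : p₁.natDegree ≤ e := hrank ▸ minpoly.natDegree_le w₁
  have hn₂le : p₂.natDegree ≤ e := hrank ▸ minpoly.natDegree_le w₂
  set M₁ := Mp i₁ c p₁ with hM₁
  set M₂ := Mp i₂ c p₂ with hM₂
  have hM₁mem : M₁ ∈ homogeneousSubmodule (Fin 3) F p₁.natDegree := Mp_mem i₁ c p₁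
  have hM₂mem : M₂ ∈ homogeneousSubmodule (Fin 3) F p₂.natDegree := Mp_mem i₂ c p₂
  have hM₁v : aeval v M₁ = 0 := by rw [hM₁, Mp_aeval v i₁ c hvc]; exact minpoly.aeval F w₁
  have hM₂v : aeval v M₂ = 0 := by rw [hM₂, Mp_aeval v i₂ c hvc]; exact minpoly.aeval F w₂
  set δ₁ := Polynomial.aeval w₁ (Polynomial.derivative p₁) with hδ₁def
  set δ₂ := Polynomial.aeval w₂ (Polynomial.derivative p₂) with hδ₂def
  have hd₁self : aeval v (pderiv i₁ M₁) = δ₁ := Mp_pderiv_self v i₁ c h1c hvc p₁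
  have hd₂self : aeval v (pderiv i₂ M₂) = δ₂ := Mp_pderiv_self v i₂ c h2c hvc p₂
  have hd₁other : pderiv i₂ M₁ = 0 := Mp_pderiv_other i₁ c i₂ (Ne.symm h12) h2c p₁
  have hd₂other : pderiv i₁ M₂ = 0 := Mp_pderiv_other i₂ c i₁ h12 h1c p₂
  have hδ₁ne : δ₁ ≠ 0 :=
    Polynomial.Separable.aeval_derivative_ne_zero
      (Algebra.IsSeparable.isSeparable F w₁) (minpoly.aeval F w₁)
  have hδ₂ne : δ₂ ≠ 0 :=
    Polynomial.Separable.aeval_derivative_ne_zero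
      (Algebra.IsSeparable.isSeparable F w₂) (minpoly.aeval F w₂)
  obtain ⟨U₀, hU₀mem, hU₀v⟩ := hrep d (by omega) a
  obtain ⟨U₁, hU₁mem, hU₁v⟩ := hrep (d - p₁.natDegree) (by omega)
    ((b₁ - aeval v (pderiv i₁ U₀)) * δ₁⁻¹)
  obtain ⟨U₂, hU₂mem, hU₂v⟩ := hrep (d - p₂.natDegree) (by omega)
    ((b₂ - aeval v (pderiv i₂ U₀)) * δ₂⁻¹)
  refine ⟨U₀ + M₁ * U₁ + M₂ * U₂, ?_, ?_, ?_, ?_⟩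
  · apply Submodule.add_mem _ (Submodule.add_mem _ hU₀mem ?_) ?_
    · rw [mem_homogeneousSubmodule]
      have := ((mem_homogeneousSubmodule _ _).mp hM₁mem).mul
        ((mem_homogeneousSubmodule _ _).mp hU₁mem)
      rwa [Nat.add_sub_cancel' (hn₁le.trans (by omega))] at this
    · rw [mem_homogeneousSubmodule]
      have := ((mem_homogeneousSubmodule _ _).mp hM₂mem).mul
        ((mem_homogeneousSubmodule _ _).mp hU₂mem)
      rwa [Nat.add_sub_cancel' (hn₂le.trans (by omega))] at this
  · rw [map_add, map_add, map_mul, map_mul, hU₀v, hM₁v, hM₂v]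
    ring
  · simp only [map_add, pderiv_mul, map_mul, hd₂other, hM₁v, hM₂v, hd₁self, hU₁v, map_zero,
      zero_mul, mul_zero, add_zero, zero_add]
    field_simp
    ring
  · simp only [map_add, pderiv_mul, map_mul, hd₁other, hM₁v, hM₂v, hd₂self, hU₂v, map_zero,
      zero_mul, mul_zero, add_zero, zero_add]
    field_simp
    ring
end Surj

/-- Poonen's Lemma 2.3 (`n = m = 2`): let `P` be a closed point of `ℙ²` over `F_q`
of degree `e` and `d ≥ 3e`.  Then the fraction of homogeneous degree-`d` forms `G`
such that the curve `C_G` fails to be smooth of dimension `1` at `P` (i.e. `G` and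
its partial derivatives vanish at `P`) equals `q^{-3e}`.

The closed point of degree `e` is given by a point of `ℙ²(F_{q^e})` with residue
field `F_{q^e}`: a representative `v` normalized so that `v c = 1` in some chart
`c`, whose coordinates generate `F_{q^e}` over `F_q`. -/
theorem singular_at_closed_point_density (F K : Type*) [Field F] [Fintype F]
    [Field K] [Fintype K] [Algebra F K]
    (q e : ℕ) (hq : Fintype.card F = q) (hK : Fintype.card K = q ^ e) (he : 1 ≤ e)
    (v : Fin 3 → K) (c : Fin 3) (hvc : v c = 1)
    (hgen : Algebra.adjoin F (Set.range v) = ⊤)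
    (d : ℕ) (hd : 3 * e ≤ d) :
    (Nat.card {G : MvPolynomial (Fin 3) F // G.IsHomogeneous d ∧
        aeval v G = 0 ∧ ∀ i : Fin 3, aeval v (pderiv i G) = 0} : ℚ) /
      (Nat.card {G : MvPolynomial (Fin 3) F // G.IsHomogeneous d} : ℚ)
    = ((q : ℚ) ^ (3 * e))⁻¹ := by
  classical
  have hq2 : 2 ≤ q := hq ▸ Fintype.one_lt_card
  have hrank : Module.finrank F K = e := by
    have hcard := Module.card_eq_pow_finrank (K := F) (V := K)
    rw [hq, hK] at hcard
    exact (Nat.pow_right_injective hq2 hcard.symm)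
  have h1c : c + 1 ≠ c := by fin_cases c <;> decide
  have h2c : c + 2 ≠ c := by fin_cases c <;> decide
  have h12 : c + 1 ≠ c + 2 := by fin_cases c <;> decide
  have hcover : ∀ i : Fin 3, i = c ∨ i = c + 1 ∨ i = c + 2 := by fin_cases c <;> decide
  set i₁ : Fin 3 := c + 1
  set i₂ : Fin 3 := c + 2
  set N := homogeneousSubmodule (Fin 3) F d with hN
  let A : MvPolynomial (Fin 3) F →ₗ[F] K :=
    (aeval v : MvPolynomial (Fin 3) F →ₐ[F] K).toLinearMap
  let P : Fin 3 → (MvPolynomial (Fin 3) F →ₗ[F] MvPolynomial (Fin 3) F) := fun i =>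
    (pderiv i : Derivation F (MvPolynomial (Fin 3) F) (MvPolynomial (Fin 3) F)).toLinearMap
  let Φ : N →ₗ[F] K × K × K :=
    LinearMap.prod (A.comp N.subtype)
      (LinearMap.prod (A.comp ((P i₁).comp N.subtype)) (A.comp ((P i₂).comp N.subtype)))
  have hΦ : ∀ x : N, Φ x = (aeval v (x : MvPolynomial (Fin 3) F),
      aeval v (pderiv i₁ (x : MvPolynomial (Fin 3) F)),
      aeval v (pderiv i₂ (x : MvPolynomial (Fin 3) F))) := fun x => rfl
  have hsurjΦ : Function.Surjective Φ := by
    rintro ⟨a, b₁, b₂⟩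
    obtain ⟨G, hG, hG1, hG2, hG3⟩ :=
      key_surj hrank he v c i₁ i₂ h1c h2c h12 hcover hvc hgen hd a b₁ b₂
    exact ⟨⟨G, hG⟩, by rw [hΦ]; exact congrArg₂ Prod.mk hG1 (congrArg₂ Prod.mk hG2 hG3)⟩
  have hNle : N ≤ restrictTotalDegree (Fin 3) F d := by
    intro p hp
    rw [mem_restrictTotalDegree]
    exact ((mem_homogeneousSubmodule _ _).mp hp).totalDegree_le
  have hRfin : Finite (restrictTotalDegree (Fin 3) F d) := Module.finite_of_finite F
  have hNfin : Finite N := Finite.of_injective _ (Submodule.inclusion_injective hNle)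
  have hker : ∀ x : N, (Φ x = 0 ↔ (aeval v (x : MvPolynomial (Fin 3) F) = 0 ∧
      ∀ i : Fin 3, aeval v (pderiv i (x : MvPolynomial (Fin 3) F)) = 0)) := by
    intro x
    rw [hΦ, Prod.ext_iff, Prod.ext_iff]
    constructor
    · rintro ⟨h0, h1, h2⟩
      exact ⟨h0, pderiv_c_eq_zero v c i₁ i₂ hcover hvc
        ((mem_homogeneousSubmodule _ _).mp x.2) h0 h1 h2⟩
    · rintro ⟨h0, hall⟩
      exact ⟨h0, hall i₁, hall i₂⟩
  let eNum : {G : MvPolynomial (Fin 3) F // G.IsHomogeneous d ∧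
      aeval v G = 0 ∧ ∀ i : Fin 3, aeval v (pderiv i G) = 0} ≃ LinearMap.ker Φ :=
  { toFun := fun G => ⟨⟨G.1, G.2.1⟩, by
      rw [LinearMap.mem_ker, hker]
      exact G.2.2⟩
    invFun := fun x => ⟨x.1.1, x.1.2, (hker x.1).mp (LinearMap.mem_ker.mp x.2)⟩
    left_inv := fun _ => rfl
    right_inv := fun _ => rfl }
  have hcard1 : Nat.card {G : MvPolynomial (Fin 3) F // G.IsHomogeneous d ∧
      aeval v G = 0 ∧ ∀ i : Fin 3, aeval v (pderiv i G) = 0}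
      = Nat.card (LinearMap.ker Φ) := Nat.card_congr eNum
  have hcard2 : Nat.card {G : MvPolynomial (Fin 3) F // G.IsHomogeneous d} = Nat.card N :=
    Nat.card_congr (Equiv.subtypeEquivRight (fun G => Iff.rfl))
  have hquot := Submodule.card_eq_card_quotient_mul_card (LinearMap.ker Φ)
  have hqe : Nat.card (N ⧸ LinearMap.ker Φ) = q ^ (3 * e) := by
    have e2 : LinearMap.range Φ = ⊤ := LinearMap.range_eq_top.mpr hsurjΦ
    have e3 : (N ⧸ LinearMap.ker Φ) ≃ₗ[F] (K × K × K) :=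
      (LinearMap.quotKerEquivRange Φ).trans (LinearEquiv.ofTop _ e2)
    rw [Nat.card_congr e3.toEquiv, Nat.card_prod, Nat.card_prod,
      Nat.card_eq_fintype_card, hK, ← pow_add, ← pow_add]
    congr 1
    ring
  have hkfin : Finite (LinearMap.ker Φ) := Subtype.finite
  have hkne : Nonempty (LinearMap.ker Φ) := ⟨0⟩
  have hkpos : 0 < Nat.card (LinearMap.ker Φ) := Nat.card_pos
  rw [hcard1, hcard2, hquot, hqe, Nat.cast_mul, Nat.cast_pow]
  have hk0 : ((Nat.card (LinearMap.ker Φ)) : ℚ) ≠ 0 := by positivity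
  have hq0 : ((q : ℚ)) ≠ 0 := by positivity
  rw [div_mul_cancel_left₀ hk0]
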